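/- Let H be a hypergraph and 𝒫 an arbitrary partition of V. Then there exists a feasible partition 𝒫' of V (each part inducing a connected subhypergraph) with |𝒫'| ≥ |𝒫| and δ(𝒫') = δ(𝒫). Consequently, the admissible set of the family of feasible partitions equals the partition polyhedron {x ≥ 0 : x(δ(𝒫)) ≥ |𝒫| - 1 for all partitions 𝒫 of V}. -/

import Mathlib

open Finset
open scoped Classical

noncomputable section

variable {V E : Type*}

/-- The set of hyperedges meeting at least two parts of the partition `P` (the cut `δ(P)`). -/
def hcut [Fintype V] [DecidableEq V] [Fintype E] (edge : E → Finset V)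
    (P : Finpartition (univ : Finset V)) : Finset E :=
  univ.filter fun e => ∃ p ∈ P.parts, ∃ q ∈ P.parts,
    p ≠ q ∧ (edge e ∩ p).Nonempty ∧ (edge e ∩ q).Nonempty

/-- The hyperedges entirely contained in the vertex set `X`. -/
def edgesIn [DecidableEq V] [Fintype E] (edge : E → Finset V) (X : Finset V) : Finset E :=
  univ.filter fun e => edge e ⊆ X

/-- The strength `S(H)`. -/
def strength [Fintype V] [DecidableEq V] [Fintype E] (edge : E → Finset V) : ℝ :=
  sInf { r : ℝ | ∃ P : Finpartition (univ : Finset V), 2 ≤ P.parts.card ∧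
    r = ((hcut edge P).card : ℝ) / ((P.parts.card : ℝ) - 1) }

/-- The weighted strength `S_σ(H)`. -/
def strengthW [Fintype V] [DecidableEq V] [Fintype E] (σ : E → ℝ) (edge : E → Finset V) : ℝ :=
  sInf { r : ℝ | ∃ P : Finpartition (univ : Finset V), 2 ≤ P.parts.card ∧
    r = (∑ e ∈ hcut edge P, σ e) / ((P.parts.card : ℝ) - 1) }

/-- The fractional arboricity `D(H)`. -/
def arboricity [Fintype V] [DecidableEq V] [Fintype E] (edge : E → Finset V) : ℝ :=
  sSup { r : ℝ | ∃ X : Finset V, 2 ≤ X.card ∧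
    r = ((edgesIn edge X).card : ℝ) / ((X.card : ℝ) - 1) }

/-- Connectivity of the subhypergraph induced by the vertex set `W`
(only hyperedges contained in `W` are used). -/
def ConnectedIn (edge : E → Finset V) (W : Finset V) : Prop :=
  ∀ X ⊆ W, X.Nonempty → X ≠ W →
    ∃ e, edge e ⊆ W ∧ (edge e ∩ X).Nonempty ∧ ((edge e ∩ W) \ X).Nonempty

/-- Connectivity of the trace hypergraph on the vertex set `W`
(each hyperedge is replaced by its intersection with `W`, as in vertex deletion). -/
def ConnectedOn (edge : E → Finset V) (W : Finset V) : Prop :=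
  ∀ X ⊆ W, X.Nonempty → X ≠ W →
    ∃ e, ((edge e ∩ W) ∩ X).Nonempty ∧ ((edge e ∩ W) \ X).Nonempty

/-- A hypergraph is connected if every nonempty proper vertex subset is crossed by a hyperedge. -/
def HConnected [Fintype V] (edge : E → Finset V) : Prop :=
  ConnectedIn edge univ

/-- `H` is partition-connected if `|δ(P)| ≥ |P| - 1` for every partition `P` of `V`. -/
def PartitionConnected [Fintype V] [DecidableEq V] [Fintype E] (edge : E → Finset V) : Prop :=
  ∀ P : Finpartition (univ : Finset V), P.parts.card - 1 ≤ (hcut edge P).card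

/-- A partition is feasible if each part induces a connected subhypergraph. -/
def Feasible [Fintype V] [DecidableEq V] (edge : E → Finset V) (P : Finpartition (univ : Finset V)) : Prop :=
  ∀ p ∈ P.parts, ConnectedIn edge p

/-- The edges of the shrunk hypergraph `H_P`: vertices are the parts of `P`, and a hyperedge
becomes the set of parts it meets. -/
def shrunkEdge [Fintype V] [DecidableEq V] (edge : E → Finset V)
    (P : Finpartition (univ : Finset V)) (e : E) : Finset {p : Finset V // p ∈ P.parts} :=
  univ.filter fun p => (edge e ∩ p.1).Nonempty

/-- The shrunk hypergraph `H_P` is vertex-biconnected: it is connected and no single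
vertex deletion disconnects it. -/
def ShrunkBiconnected [Fintype V] [DecidableEq V] [Fintype E] (edge : E → Finset V)
    (P : Finpartition (univ : Finset V)) : Prop :=
  ConnectedIn (shrunkEdge edge P) univ ∧
  ∀ p : {p : Finset V // p ∈ P.parts}, ConnectedOn (shrunkEdge edge P) (univ \ {p})

/-- `F` is a hypertree: a hyperforest of size `|V| - 1`. -/
def IsHypertree [Fintype V] [DecidableEq V] (edge : E → Finset V) (F : Finset E) : Prop :=
  F.card = Fintype.card V - 1 ∧
  ∀ X : Finset V, X.Nonempty → (F.filter fun e => edge e ⊆ X).card ≤ X.card - 1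

/-- `m` is the multiplicity vector of a multiset of hyperedges forming a hypertree on `V`. -/
def IsMultiTree [Fintype V] [DecidableEq V] [Fintype E] (edge : E → Finset V) (m : E → ℕ) : Prop :=
  (∑ e, m e) = Fintype.card V - 1 ∧
  ∀ X : Finset V, X.Nonempty → (∑ e ∈ edgesIn edge X, m e) ≤ X.card - 1

/-- The multi-tree family `Ω(H)` as a set of usage vectors in `ℝ^E`. -/
def OmegaSet [Fintype V] [DecidableEq V] [Fintype E] (edge : E → Finset V) : Set (E → ℝ) :=
  { x | ∃ m : E → ℕ, IsMultiTree edge m ∧ x = fun e => (m e : ℝ) }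

/-- The hypertree family `Γ(H)` as a set of (indicator) usage vectors in `ℝ^E`. -/
def GammaSet [Fintype V] [DecidableEq V] [Fintype E] (edge : E → Finset V) : Set (E → ℝ) :=
  { x | ∃ F : Finset E, IsHypertree edge F ∧ x = fun e => if e ∈ F then (1 : ℝ) else 0 }

/-- The admissible set of a family of usage vectors. -/
def AdmSet [Fintype E] (G : Set (E → ℝ)) : Set (E → ℝ) :=
  { ρ | (∀ e, 0 ≤ ρ e) ∧ ∀ x ∈ G, 1 ≤ ∑ e, x e * ρ e }

/-- The weighted 1-modulus of a family of usage vectors. -/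
def Mod1 [Fintype E] (σ : E → ℝ) (G : Set (E → ℝ)) : ℝ :=
  sInf { t : ℝ | ∃ ρ ∈ AdmSet G, t = ∑ e, σ e * ρ e }

/-- `w` is an extreme point of `S`: it lies in `S` and is not the midpoint of two
distinct points of `S`. -/
def IsExtremePt [Fintype E] (S : Set (E → ℝ)) (w : E → ℝ) : Prop :=
  w ∈ S ∧ ∀ y ∈ S, ∀ z ∈ S, (∀ e, w e = (y e + z e) / 2) → y = z

/-- The rank function of the hypergraphic matroid `M(H)` (Frank et al.):
`r(F) = min { |V| - |P| + |δ_F(P)| }` over partitions `P` of `V`. -/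
def hrank [Fintype V] [DecidableEq V] [Fintype E] [DecidableEq E]
    (edge : E → Finset V) (F : Finset E) : ℕ :=
  sInf { n : ℕ | ∃ P : Finpartition (univ : Finset V),
    n = Fintype.card V - P.parts.card + (hcut edge P ∩ F).card }

/-- The (unweighted) strength of the hypergraphic matroid `M(H)`. -/
def mstrength [Fintype V] [DecidableEq V] [Fintype E] [DecidableEq E]
    (edge : E → Finset V) : ℝ :=
  sInf { r : ℝ | ∃ X : Finset E, hrank edge (univ \ X) < hrank edge univ ∧
    r = (X.card : ℝ) / ((hrank edge univ : ℝ) - (hrank edge (univ \ X) : ℝ)) }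

/-- The fractional arboricity of the hypergraphic matroid `M(H)`. -/
def marboricity [Fintype V] [DecidableEq V] [Fintype E] [DecidableEq E]
    (edge : E → Finset V) : ℝ :=
  sSup { r : ℝ | ∃ X : Finset E, 0 < hrank edge X ∧ r = (X.card : ℝ) / (hrank edge X : ℝ) }

end


section Aux3

open Finset
open scoped Classical

variable {V E : Type*}

lemma hcut_mem_iff [Fintype V] [DecidableEq V] [Fintype E] (edge : E → Finset V)
    (P : Finpartition (univ : Finset V)) (e : E) :
    e ∈ hcut edge P ↔ ∃ p ∈ P.parts, ∃ q ∈ P.parts,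
      p ≠ q ∧ (edge e ∩ p).Nonempty ∧ (edge e ∩ q).Nonempty := by
  simp [hcut]

lemma split_lemma [Fintype V] [DecidableEq V] [Fintype E] (edge : E → Finset V)
    (Q : Finpartition (univ : Finset V)) (p : Finset V) (hp : p ∈ Q.parts)
    (X : Finset V) (hXp : X ⊆ p) (hXne : X.Nonempty) (hXne' : X ≠ p)
    (hno : ∀ e, ¬(edge e ⊆ p ∧ (edge e ∩ X).Nonempty ∧ ((edge e ∩ p) \ X).Nonempty)) :
    ∃ Q' : Finpartition (univ : Finset V),
      Q'.parts.card = Q.parts.card + 1 ∧ hcut edge Q' = hcut edge Q := by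
  classical
  have hY : (p \ X).Nonempty := sdiff_nonempty.mpr (fun h => hXne' (subset_antisymm hXp h))
  have hdisjXY : Disjoint X (p \ X) := disjoint_sdiff
  have hsub : ∀ q, q ⊆ p → q.Nonempty → q ∉ Q.parts.erase p := by
    intro q hqp hqne hq
    have hqp' : q ≠ p := (Finset.mem_erase.mp hq).1
    have hd := Q.disjoint (Finset.mem_of_mem_erase hq) hp hqp'
    obtain ⟨v, hv⟩ := hqne
    exact (Finset.disjoint_left.mp hd hv) (hqp hv)
  have hXnotE : X ∉ Q.parts.erase p := hsub X hXp hXne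
  have hYnotE : (p \ X) ∉ Q.parts.erase p := hsub _ sdiff_subset hY
  have hXneY : X ≠ p \ X := by
    intro h
    obtain ⟨v, hv⟩ := hXne
    exact (Finset.disjoint_left.mp hdisjXY hv) (h ▸ hv)
  set parts' : Finset (Finset V) := insert X (insert (p \ X) (Q.parts.erase p)) with hparts'
  have hmem' : ∀ a, a ∈ parts' ↔ a = X ∨ a = p \ X ∨ a ∈ Q.parts.erase p := by
    intro a; simp [hparts']
  have hunion : X ∪ (p \ X) = p := Finset.union_sdiff_of_subset hXp
  have keyE : ∀ q ∈ Q.parts.erase p, ∀ r, r ⊆ p → Disjoint q r := by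
    intro q hq r hrp
    exact (Q.disjoint (Finset.mem_of_mem_erase hq) hp (Finset.mem_erase.mp hq).1).mono_right hrp
  have hpwd : (↑parts' : Set (Finset V)).PairwiseDisjoint id := by
    intro a ha b hb hab
    rw [Finset.mem_coe, hmem'] at ha hb
    rcases ha with rfl | rfl | ha <;> rcases hb with rfl | rfl | hb
    · exact absurd rfl hab
    · exact hdisjXY
    · exact (keyE _ hb _ hXp).symm
    · exact hdisjXY.symm
    · exact absurd rfl hab
    · exact (keyE _ hb _ sdiff_subset).symm
    · exact keyE _ ha _ hXp
    · exact keyE _ ha _ sdiff_subset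
    · exact Q.disjoint (Finset.mem_of_mem_erase ha) (Finset.mem_of_mem_erase hb) hab
  obtain ⟨Q', hQp⟩ : ∃ Q' : Finpartition (univ : Finset V), Q'.parts = parts' := by
    refine ⟨⟨parts', Finset.supIndep_iff_pairwiseDisjoint.mpr hpwd, ?_, ?_⟩, rfl⟩
    · have h1 : parts'.sup id = X ⊔ ((p \ X) ⊔ (Q.parts.erase p).sup id) := by
        simp [hparts']
      rw [h1, ← sup_assoc]
      have h2 : X ⊔ (p \ X) = p := by
        simpa [Finset.sup_eq_union] using hunion
      rw [h2]
      have h3 : p ⊔ (Q.parts.erase p).sup id = Q.parts.sup id := by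
        conv_rhs => rw [← Finset.insert_erase hp]
        simp
      rw [h3, Q.sup_parts]
    · intro hbot
      rw [hmem'] at hbot
      rcases hbot with h | h | h
      · exact hXne.ne_empty h.symm
      · exact hY.ne_empty h.symm
      · exact Q.bot_notMem (Finset.mem_of_mem_erase h)
  refine ⟨Q', ?_, ?_⟩
  · rw [hQp, hparts']
    rw [Finset.card_insert_of_notMem, Finset.card_insert_of_notMem hYnotE,
      Finset.card_erase_of_mem hp]
    · have : 1 ≤ Q.parts.card := Finset.card_pos.mpr ⟨p, hp⟩
      omega
    · simp only [Finset.mem_insert]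
      push_neg
      exact ⟨hXneY, hXnotE⟩
  · ext e
    rw [hcut_mem_iff, hcut_mem_iff]
    -- helper for the "both inside p" case
    have inner : (edge e ∩ X).Nonempty → (edge e ∩ (p \ X)).Nonempty →
        ∃ a ∈ Q.parts, ∃ b ∈ Q.parts, a ≠ b ∧
          (edge e ∩ a).Nonempty ∧ (edge e ∩ b).Nonempty := by
      intro h1 h2
      by_cases hep : edge e ⊆ p
      · exfalso
        refine hno e ⟨hep, h1, ?_⟩
        obtain ⟨v, hv⟩ := h2
        rw [Finset.mem_inter, Finset.mem_sdiff] at hv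
        exact ⟨v, by rw [Finset.mem_sdiff, Finset.mem_inter]
                     exact ⟨⟨hv.1, hv.2.1⟩, hv.2.2⟩⟩
      · obtain ⟨v, hve, hvp⟩ : ∃ v ∈ edge e, v ∉ p := by
          by_contra h; push_neg at h; exact hep h
        obtain ⟨q, hq, hvq⟩ := Q.exists_mem (Finset.mem_univ v)
        refine ⟨q, hq, p, hp, fun h => hvp (h ▸ hvq), ⟨v, Finset.mem_inter.mpr ⟨hve, hvq⟩⟩, ?_⟩
        exact h1.mono (Finset.inter_subset_inter le_rfl hXp)
    constructor
    · rintro ⟨a, ha, b, hb, hab, hea, heb⟩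
      rw [hQp, hmem'] at ha hb
      have fromE : ∀ c ∈ Q.parts.erase p, ∀ d, d ⊆ p → (edge e ∩ c).Nonempty →
          (edge e ∩ d).Nonempty →
          ∃ a ∈ Q.parts, ∃ b ∈ Q.parts, a ≠ b ∧
            (edge e ∩ a).Nonempty ∧ (edge e ∩ b).Nonempty := by
        intro c hc d hdp h1 h2
        exact ⟨c, Finset.mem_of_mem_erase hc, p, hp, (Finset.mem_erase.mp hc).1, h1,
          h2.mono (Finset.inter_subset_inter le_rfl hdp)⟩
      rcases ha with rfl | rfl | ha <;> rcases hb with rfl | rfl | hb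
      · exact absurd rfl hab
      · exact inner hea heb
      · exact fromE _ hb _ hXp heb hea
      · exact inner heb hea
      · exact absurd rfl hab
      · exact fromE _ hb _ sdiff_subset heb hea
      · exact fromE _ ha _ hXp hea heb
      · exact fromE _ ha _ sdiff_subset hea heb
      · exact ⟨a, Finset.mem_of_mem_erase ha, b, Finset.mem_of_mem_erase hb,
          hab, hea, heb⟩
    · rintro ⟨a, ha, b, hb, hab, hea, heb⟩
      have pick : ∀ c ∈ Q.parts, (edge e ∩ c).Nonempty →
          ∃ c' ∈ Q'.parts, c' ⊆ c ∧ (edge e ∩ c').Nonempty := by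
        intro c hc hec
        by_cases hcp : c = p
        · subst hcp
          obtain ⟨v, hv⟩ := hec
          rw [Finset.mem_inter] at hv
          by_cases hvX : v ∈ X
          · refine ⟨X, ?_, hXp, ⟨v, Finset.mem_inter.mpr ⟨hv.1, hvX⟩⟩⟩
            rw [hQp, hmem']; exact Or.inl rfl
          · refine ⟨c \ X, ?_, sdiff_subset,
              ⟨v, Finset.mem_inter.mpr ⟨hv.1, Finset.mem_sdiff.mpr ⟨hv.2, hvX⟩⟩⟩⟩
            rw [hQp, hmem']; exact Or.inr (Or.inl rfl)
        · refine ⟨c, ?_, le_rfl, hec⟩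
          rw [hQp, hmem']; exact Or.inr (Or.inr (Finset.mem_erase.mpr ⟨hcp, hc⟩))
      obtain ⟨a', ha', haa, hea'⟩ := pick a ha hea
      obtain ⟨b', hb', hbb, heb'⟩ := pick b hb heb
      refine ⟨a', ha', b', hb', ?_, hea', heb'⟩
      intro h
      obtain ⟨v, hv⟩ := hea'
      rw [Finset.mem_inter] at hv
      have hva : v ∈ a := haa hv.2
      have hvb : v ∈ b := hbb (h ▸ hv.2)
      exact hab (Q.eq_of_mem_parts ha hb hva hvb)

lemma feasible_refine [Fintype V] [DecidableEq V] [Fintype E] (edge : E → Finset V) :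
    ∀ n (Q : Finpartition (univ : Finset V)), Fintype.card V ≤ Q.parts.card + n →
      ∃ Q' : Finpartition (univ : Finset V),
        Feasible edge Q' ∧ Q.parts.card ≤ Q'.parts.card ∧ hcut edge Q' = hcut edge Q := by
  intro n
  induction n with
  | zero =>
    intro Q hQ
    by_cases hfeas : Feasible edge Q
    · exact ⟨Q, hfeas, le_rfl, rfl⟩
    · exfalso
      obtain ⟨p, hp, X, hXp, hXne, hXp', hno⟩ :
          ∃ p ∈ Q.parts, ∃ X ⊆ p, X.Nonempty ∧ X ≠ p ∧
            ∀ e, ¬(edge e ⊆ p ∧ (edge e ∩ X).Nonempty ∧ ((edge e ∩ p) \ X).Nonempty) := by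
        by_contra h
        push_neg at h
        refine hfeas fun p hp X hXp hXne hXp' => ?_
        obtain ⟨e, he⟩ := h p hp X hXp hXne hXp'
        refine ⟨e, he.1, ?_, ?_⟩
        · convert he.2.1 using 2 <;> congr!
        · convert he.2.2 using 2 <;> congr!
      obtain ⟨Q', hcard, _⟩ := split_lemma edge Q p hp X hXp hXne hXp'
        hno
      have h1 : Q'.parts.card ≤ Fintype.card V := by
        simpa using Q'.card_parts_le_card
      omega
  | succ n ih =>
    intro Q hQ
    by_cases hfeas : Feasible edge Q
    · exact ⟨Q, hfeas, le_rfl, rfl⟩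
    · obtain ⟨p, hp, X, hXp, hXne, hXp', hno⟩ :
          ∃ p ∈ Q.parts, ∃ X ⊆ p, X.Nonempty ∧ X ≠ p ∧
            ∀ e, ¬(edge e ⊆ p ∧ (edge e ∩ X).Nonempty ∧ ((edge e ∩ p) \ X).Nonempty) := by
        by_contra h
        push_neg at h
        refine hfeas fun p hp X hXp hXne hXp' => ?_
        obtain ⟨e, he⟩ := h p hp X hXp hXne hXp'
        refine ⟨e, he.1, ?_, ?_⟩
        · convert he.2.1 using 2 <;> congr!
        · convert he.2.2 using 2 <;> congr!
      obtain ⟨Q', hcard, hcut'⟩ := split_lemma edge Q p hp X hXp hXne hXp'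
        hno
      obtain ⟨Q'', hf, hc, hcu⟩ := ih Q' (by omega)
      exact ⟨Q'', hf, by omega, by rw [hcu, hcut']⟩

end Aux3

/-- Every partition of `V` can be refined to a feasible partition with at least
as many parts and the same cut; consequently the admissible set of the family of feasible
partitions equals the partition polyhedron. -/
theorem stmt3 {V E : Type*} [Fintype V] [DecidableEq V] [Fintype E] [DecidableEq E]
    (edge : E → Finset V) :
    (∀ P : Finpartition (univ : Finset V), ∃ P' : Finpartition (univ : Finset V),
      Feasible edge P' ∧ P.parts.card ≤ P'.parts.card ∧ hcut edge P' = hcut edge P) ∧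
    { x : E → ℝ | (∀ e, 0 ≤ x e) ∧ ∀ P : Finpartition (univ : Finset V), Feasible edge P →
        (P.parts.card : ℝ) - 1 ≤ ∑ e ∈ hcut edge P, x e } =
    { x : E → ℝ | (∀ e, 0 ≤ x e) ∧ ∀ P : Finpartition (univ : Finset V),
        (P.parts.card : ℝ) - 1 ≤ ∑ e ∈ hcut edge P, x e } := by
  classical
  have main : ∀ P : Finpartition (univ : Finset V), ∃ P' : Finpartition (univ : Finset V),
      Feasible edge P' ∧ P.parts.card ≤ P'.parts.card ∧ hcut edge P' = hcut edge P := by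
    intro P
    exact feasible_refine edge (Fintype.card V) P (by omega)
  refine ⟨main, ?_⟩
  ext x
  simp only [Set.mem_setOf_eq]
  constructor
  · rintro ⟨hx0, hx⟩
    refine ⟨hx0, fun P => ?_⟩
    obtain ⟨P', hf, hc, hcu⟩ := main P
    have h1 : (P.parts.card : ℝ) - 1 ≤ (P'.parts.card : ℝ) - 1 := by
      have h2 : (P.parts.card : ℝ) ≤ (P'.parts.card : ℝ) := by exact_mod_cast hc
      linarith
    calc (P.parts.card : ℝ) - 1 ≤ (P'.parts.card : ℝ) - 1 := h1
      _ ≤ ∑ e ∈ hcut edge P', x e := hx P' hf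
      _ = ∑ e ∈ hcut edge P, x e := by rw [hcu]
  · rintro ⟨hx0, hx⟩
    exact ⟨hx0, fun P _ => hx P⟩
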